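/- Let g be a monotonically increasing weight function with C_g = ∑_{n=1}^∞ 1/g(n) < ∞, and let T be a matrix with entries in A such that ‖T‖_g < 1/C_g and ‖T‖_f < ∞ for every weight f in a set W of monotonically increasing weight functions containing g. Then T is quasi-invertible in M(A,W): the matrix Y whose (i,j) entry is Y_{ij} := −∑_{n=1}^∞ (T^n)_{ij} (the series converging absolutely in A, where T^1 := T, T^{n+1} := T^n·T) satisfies ‖Y‖_f < ∞ for all f ∈ W, TY = YT, and T + Y − TY = 0. -/

import Mathlib

/-- The weighted norm `‖T‖_f = sup_{i,j} f(max(i,j))·‖t_{ij}‖` (as a real supremum). -/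
noncomputable def wnorm {A : Type*} [NonUnitalNormedRing A]
    (f : ℕ+ → ℝ) (T : ℕ+ → ℕ+ → A) : ℝ :=
  sSup (Set.range fun p : ℕ+ × ℕ+ => f (max p.1 p.2) * ‖T p.1 p.2‖)

/-- Finiteness of the weighted norm `‖T‖_f`. -/
def WFinite {A : Type*} [NonUnitalNormedRing A]
    (f : ℕ+ → ℝ) (T : ℕ+ → ℕ+ → A) : Prop :=
  BddAbove (Set.range fun p : ℕ+ × ℕ+ => f (max p.1 p.2) * ‖T p.1 p.2‖)

/-- The entrywise matrix product `(RS)_{ij} = ∑_k r_{ik} s_{kj}`. -/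
noncomputable def matMul {A : Type*} [NonUnitalNormedRing A]
    (R S : ℕ+ → ℕ+ → A) : ℕ+ → ℕ+ → A :=
  fun i j => ∑' k : ℕ+, R i k * S k j

/-- Matrix powers: `matPow T n` is `T^(n+1)`, i.e. `matPow T 0 = T = T^1` and
`matPow T (n+1) = (matPow T n) · T = T^(n+2)`. -/
noncomputable def matPow {A : Type*} [NonUnitalNormedRing A]
    (T : ℕ+ → ℕ+ → A) : ℕ → (ℕ+ → ℕ+ → A)
  | 0 => T
  | n + 1 => matMul (matPow T n) T

section Aux

variable {A : Type*} [NonUnitalNormedRing A]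

lemma wnorm_entry_le {f : ℕ+ → ℝ} {T : ℕ+ → ℕ+ → A} (h : WFinite f T) (i j : ℕ+) :
    f (max i j) * ‖T i j‖ ≤ wnorm f T :=
  le_csSup h ⟨(i, j), rfl⟩

lemma wnorm_nonneg {f : ℕ+ → ℝ} {T : ℕ+ → ℕ+ → A} (h : WFinite f T) (hf : ∀ n, 0 < f n) :
    0 ≤ wnorm f T :=
  le_trans (mul_nonneg (hf _).le (norm_nonneg _)) (wnorm_entry_le h 1 1)

lemma entry_le_of_wfinite {f : ℕ+ → ℝ} {T : ℕ+ → ℕ+ → A} (h : WFinite f T)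
    (hf : ∀ n, 0 < f n) (i j : ℕ+) : ‖T i j‖ ≤ wnorm f T * (f (max i j))⁻¹ := by
  have h1 := wnorm_entry_le h i j
  have h2 := hf (max i j)
  rw [← div_eq_mul_inv, le_div_iff₀ h2]
  linarith [h1, mul_comm (f (max i j)) ‖T i j‖]

lemma g_max_mul_le {g : ℕ+ → ℝ} (hg : Monotone g) (hgpos : ∀ n, 0 < g n) (i j k : ℕ+) :
    g (max i j) * g k ≤ g (max i k) * g (max k j) := by
  rcases le_total k (max i j) with h | h
  · rcases le_total i j with hij | hij
    · rw [max_eq_right hij, max_eq_right (h.trans_eq (max_eq_right hij))]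
      rw [mul_comm (g (max i k))]
      exact mul_le_mul_of_nonneg_left (hg (le_max_right i k)) (hgpos j).le
    · rw [max_eq_left hij, max_eq_left (h.trans_eq (max_eq_left hij))]
      exact mul_le_mul_of_nonneg_left (hg (le_max_left k j)) (hgpos i).le
  · have h1 : g (max i j) ≤ g (max i k) := hg (h.trans (le_max_right i k))
    have h2 : g k ≤ g (max k j) := hg (le_max_left k j)
    exact mul_le_mul h1 h2 (hgpos k).le (hgpos _).le

end Aux

/-- Let `W` be a set of monotone weights containing `g`, with
`C_g = ∑ 1/g(n) < ∞`. If `T ∈ M(A,W)` and `‖T‖_g < 1/C_g`, then `T` is quasi-invertible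
in `M(A,W)`: the matrix `Y` with entries `Y_{ij} = −∑_{n≥1} (T^n)_{ij}` (the series
converging absolutely in `A`) lies in `M(A,W)`, commutes with `T`, and satisfies
`T + Y − TY = 0`. Here `matPow T n = T^(n+1)`, so `∑' (n : ℕ)` sums `T^1, T^2, …`. -/
theorem quasi_invertible_of_small
    {A : Type*} [NonUnitalNormedRing A] [CompleteSpace A]
    (W : Set (ℕ+ → ℝ)) (hW : ∀ f ∈ W, Monotone f ∧ ∀ n, 0 < f n)
    (g : ℕ+ → ℝ) (hgW : g ∈ W)
    (hCg : Summable fun n : ℕ+ => 1 / g n)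
    (T : ℕ+ → ℕ+ → A)
    (hT : ∀ f ∈ W, WFinite f T)
    (hsmall : wnorm g T < 1 / (∑' n : ℕ+, 1 / g n)) :
    (∀ i j : ℕ+, Summable fun n : ℕ => ‖matPow T n i j‖) ∧
    (∀ f ∈ W, WFinite f (fun i j => -∑' n : ℕ, matPow T n i j)) ∧
    matMul T (fun i j => -∑' n : ℕ, matPow T n i j)
      = matMul (fun i j => -∑' n : ℕ, matPow T n i j) T ∧
    ∀ i j : ℕ+,
      T i j + (-∑' n : ℕ, matPow T n i j)
        - matMul T (fun i' j' => -∑' n : ℕ, matPow T n i' j') i j = 0 := by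
  obtain ⟨hgmono, hgpos⟩ := hW g hgW
  set t := wnorm g T with ht_def
  set C := ∑' n : ℕ+, 1 / g n with hC_def
  have hC0 : 0 < C := Summable.tsum_pos hCg (fun n => (one_div_pos.2 (hgpos n)).le) 1
    (one_div_pos.2 (hgpos 1))
  have hCg' : Summable fun n : ℕ+ => (g n)⁻¹ := by simpa [one_div] using hCg
  have hCinv : ∑' n : ℕ+, (g n)⁻¹ = C := by simp only [hC_def, one_div]
  have ht0 : 0 ≤ t := wnorm_nonneg (hT g hgW) hgpos
  set q := t * C with hq_def
  have hq0 : 0 ≤ q := mul_nonneg ht0 hC0.le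
  have hq1 : q < 1 := by
    rw [hq_def, ← lt_div_iff₀ hC0]
    exact hsmall
  have hgi : ∀ n : ℕ+, (0:ℝ) < (g n)⁻¹ := fun n => inv_pos.2 (hgpos n)
  have hqn : ∀ n : ℕ, (0:ℝ) ≤ q ^ n := fun n => pow_nonneg hq0 n
  -- entry bound for T with weight g
  have hTb : ∀ i j : ℕ+, ‖T i j‖ ≤ t * (g (max i j))⁻¹ :=
    entry_le_of_wfinite (hT g hgW) hgpos
  have hTbl : ∀ i j : ℕ+, ‖T i j‖ ≤ t * (g i)⁻¹ := fun i j =>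
    (hTb i j).trans (mul_le_mul_of_nonneg_left
      (inv_anti₀ (hgpos _) (hgmono (le_max_left i j))) ht0)
  have hTbr : ∀ i j : ℕ+, ‖T i j‖ ≤ t * (g j)⁻¹ := fun i j =>
    (hTb i j).trans (mul_le_mul_of_nonneg_left
      (inv_anti₀ (hgpos _) (hgmono (le_max_right i j))) ht0)
  -- the pure g bound on powers
  have hP : ∀ n (i j : ℕ+), ‖matPow T n i j‖ ≤ t * q ^ n * (g (max i j))⁻¹ := by
    intro n
    induction n with
    | zero => intro i j; simpa [matPow] using hTb i j
    | succ n ih =>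
      intro i j
      have hterm : ∀ k : ℕ+, ‖matPow T n i k * T k j‖
          ≤ t * q ^ n * t * (g (max i j))⁻¹ * (g k)⁻¹ := by
        intro k
        calc ‖matPow T n i k * T k j‖ ≤ ‖matPow T n i k‖ * ‖T k j‖ := norm_mul_le _ _
          _ ≤ (t * q ^ n * (g (max i k))⁻¹) * (t * (g (max k j))⁻¹) :=
              mul_le_mul (ih i k) (hTb k j) (norm_nonneg _)
                (mul_nonneg (mul_nonneg ht0 (hqn n)) (hgi _).le)
          _ = (t * q ^ n * t) * (g (max i k) * g (max k j))⁻¹ := by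
              rw [mul_inv]; ring
          _ ≤ (t * q ^ n * t) * (g (max i j) * g k)⁻¹ := by
              refine mul_le_mul_of_nonneg_left
                (inv_anti₀ (mul_pos (hgpos _) (hgpos _))
                  (g_max_mul_le hgmono hgpos i j k))
                (mul_nonneg (mul_nonneg ht0 (hqn n)) ht0)
          _ = t * q ^ n * t * (g (max i j))⁻¹ * (g k)⁻¹ := by rw [mul_inv]; ring
      have hsumb : Summable fun k : ℕ+ => t * q ^ n * t * (g (max i j))⁻¹ * (g k)⁻¹ :=
        hCg'.mul_left _
      have hsum : Summable fun k : ℕ+ => ‖matPow T n i k * T k j‖ :=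
        Summable.of_nonneg_of_le (fun _ => norm_nonneg _) hterm hsumb
      have : matPow T (n + 1) i j = ∑' k : ℕ+, matPow T n i k * T k j := rfl
      rw [this]
      calc ‖∑' k : ℕ+, matPow T n i k * T k j‖
          ≤ ∑' k : ℕ+, ‖matPow T n i k * T k j‖ := norm_tsum_le_tsum_norm hsum
        _ ≤ ∑' k : ℕ+, t * q ^ n * t * (g (max i j))⁻¹ * (g k)⁻¹ :=
            Summable.tsum_le_tsum hterm hsum hsumb
        _ = t * q ^ n * t * (g (max i j))⁻¹ * C := by
            rw [Summable.tsum_mul_left _ hCg', hCinv]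
        _ = t * q ^ (n + 1) * (g (max i j))⁻¹ := by rw [pow_succ, hq_def]; ring
  -- constant bound on each power
  have hPc : ∀ n (k l : ℕ+), ‖matPow T n k l‖ ≤ t * q ^ n * (g 1)⁻¹ := fun n k l =>
    (hP n k l).trans (mul_le_mul_of_nonneg_left
      (inv_anti₀ (hgpos 1) (hgmono (max k l).one_le))
      (mul_nonneg ht0 (hqn n)))
  -- decoupled bounds on powers
  have hPl : ∀ n (k l : ℕ+), ‖matPow T n k l‖ ≤ t * q ^ n * (g k)⁻¹ := fun n k l =>
    (hP n k l).trans (mul_le_mul_of_nonneg_left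
      (inv_anti₀ (hgpos _) (hgmono (le_max_left k l))) (mul_nonneg ht0 (hqn n)))
  have hPr : ∀ n (k l : ℕ+), ‖matPow T n k l‖ ≤ t * q ^ n * (g l)⁻¹ := fun n k l =>
    (hP n k l).trans (mul_le_mul_of_nonneg_left
      (inv_anti₀ (hgpos _) (hgmono (le_max_right k l))) (mul_nonneg ht0 (hqn n)))
  have hgeo : Summable fun n : ℕ => q ^ n := summable_geometric_of_lt_one hq0 hq1
  -- (1) absolute convergence of each entry series
  have habs : ∀ i j : ℕ+, Summable fun n : ℕ => ‖matPow T n i j‖ := by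
    intro i j
    refine Summable.of_nonneg_of_le (fun _ => norm_nonneg _)
      (fun n => ?_) ((hgeo.mul_left (t * (g (max i j))⁻¹)))
    calc ‖matPow T n i j‖ ≤ t * q ^ n * (g (max i j))⁻¹ := hP n i j
      _ = t * (g (max i j))⁻¹ * q ^ n := by ring
  have hZsum : ∀ i j : ℕ+, Summable fun n : ℕ => matPow T n i j := fun i j =>
    (habs i j).of_norm
  have hTc : ∀ k l : ℕ+, ‖T k l‖ ≤ t * (g 1)⁻¹ := fun k l => by
    simpa [matPow] using hPc 0 k l
  -- mixed bound for a general weight f ∈ W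
  have hPf : ∀ f ∈ W, ∀ n (i j : ℕ+),
      ‖matPow T n i j‖ ≤ wnorm f T * ((n : ℝ) + 1) * q ^ n * (f (max i j))⁻¹ := by
    intro f hfW
    obtain ⟨hfmono, hfpos⟩ := hW f hfW
    have hfi : ∀ n : ℕ+, (0:ℝ) < (f n)⁻¹ := fun n => inv_pos.2 (hfpos n)
    set M := wnorm f T with hM_def
    have hM0 : 0 ≤ M := wnorm_nonneg (hT f hfW) hfpos
    have hfb : ∀ i j : ℕ+, ‖T i j‖ ≤ M * (f (max i j))⁻¹ :=
      entry_le_of_wfinite (hT f hfW) hfpos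
    intro n
    induction n with
    | zero => intro i j; simpa [matPow] using hfb i j
    | succ n ih =>
      intro i j
      have hcase : ∀ k : ℕ+, ‖matPow T n i k * T k j‖
          ≤ (M * ((n:ℝ) + 1) * q ^ n * t + t * q ^ n * M) * (f (max i j))⁻¹ * (g k)⁻¹ := by
        intro k
        have hmaxle : max i j ≤ max (max i k) (max k j) :=
          max_le_max (le_max_left i k) (le_max_right k j)
        rcases le_max_iff.mp hmaxle with hc | hc
        · have b1 : ‖matPow T n i k‖ ≤ M * ((n:ℝ) + 1) * q ^ n * (f (max i j))⁻¹ :=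
            (ih i k).trans (mul_le_mul_of_nonneg_left
              (inv_anti₀ (hfpos _) (hfmono hc))
              (mul_nonneg (mul_nonneg hM0 (by positivity)) (hqn n)))
          calc ‖matPow T n i k * T k j‖ ≤ ‖matPow T n i k‖ * ‖T k j‖ := norm_mul_le _ _
            _ ≤ (M * ((n:ℝ) + 1) * q ^ n * (f (max i j))⁻¹) * (t * (g k)⁻¹) :=
                mul_le_mul b1 (hTbl k j) (norm_nonneg _)
                  (mul_nonneg (mul_nonneg (mul_nonneg hM0 (by positivity)) (hqn n))
                    (hfi _).le)
            _ = (M * ((n:ℝ) + 1) * q ^ n * t) * (f (max i j))⁻¹ * (g k)⁻¹ := by ring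
            _ ≤ (M * ((n:ℝ) + 1) * q ^ n * t) * (f (max i j))⁻¹ * (g k)⁻¹
                + (t * q ^ n * M) * (f (max i j))⁻¹ * (g k)⁻¹ :=
                le_add_of_nonneg_right (mul_nonneg (mul_nonneg
                  (mul_nonneg (mul_nonneg ht0 (hqn n)) hM0) (hfi _).le) (hgi _).le)
            _ = _ := by ring
        · have b1 : ‖matPow T n i k‖ ≤ t * q ^ n * (g k)⁻¹ := hPr n i k
          have b2 : ‖T k j‖ ≤ M * (f (max i j))⁻¹ :=
            (hfb k j).trans (mul_le_mul_of_nonneg_left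
              (inv_anti₀ (hfpos _) (hfmono hc)) hM0)
          calc ‖matPow T n i k * T k j‖ ≤ ‖matPow T n i k‖ * ‖T k j‖ := norm_mul_le _ _
            _ ≤ (t * q ^ n * (g k)⁻¹) * (M * (f (max i j))⁻¹) :=
                mul_le_mul b1 b2 (norm_nonneg _)
                  (mul_nonneg (mul_nonneg ht0 (hqn n)) (hgi k).le)
            _ = (t * q ^ n * M) * (f (max i j))⁻¹ * (g k)⁻¹ := by ring
            _ ≤ (M * ((n:ℝ) + 1) * q ^ n * t) * (f (max i j))⁻¹ * (g k)⁻¹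
                + (t * q ^ n * M) * (f (max i j))⁻¹ * (g k)⁻¹ :=
                le_add_of_nonneg_left (mul_nonneg (mul_nonneg (mul_nonneg (mul_nonneg
                  (mul_nonneg hM0 (by positivity)) (hqn n)) ht0) (hfi _).le) (hgi _).le)
            _ = _ := by ring
      have hsumb : Summable fun k : ℕ+ =>
          (M * ((n:ℝ) + 1) * q ^ n * t + t * q ^ n * M) * (f (max i j))⁻¹ * (g k)⁻¹ := by
        simpa [mul_assoc] using
          hCg'.mul_left ((M * ((n:ℝ) + 1) * q ^ n * t + t * q ^ n * M) * (f (max i j))⁻¹)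
      have hsum : Summable fun k : ℕ+ => ‖matPow T n i k * T k j‖ :=
        Summable.of_nonneg_of_le (fun _ => norm_nonneg _) hcase hsumb
      have hrfl : matPow T (n + 1) i j = ∑' k : ℕ+, matPow T n i k * T k j := rfl
      rw [hrfl]
      calc ‖∑' k : ℕ+, matPow T n i k * T k j‖
          ≤ ∑' k : ℕ+, ‖matPow T n i k * T k j‖ := norm_tsum_le_tsum_norm hsum
        _ ≤ ∑' k : ℕ+,
            (M * ((n:ℝ) + 1) * q ^ n * t + t * q ^ n * M) * (f (max i j))⁻¹ * (g k)⁻¹ :=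
            Summable.tsum_le_tsum hcase hsum hsumb
        _ = (M * ((n:ℝ) + 1) * q ^ n * t + t * q ^ n * M) * (f (max i j))⁻¹ * C := by
            rw [Summable.tsum_mul_left _ hCg', hCinv]
        _ = M * ((n + 1 : ℕ) + 1 : ℝ) * q ^ (n + 1) * (f (max i j))⁻¹ := by
            push_cast
            rw [pow_succ, hq_def]
            ring
  -- summability of (n+1) q^n
  have hS : Summable fun n : ℕ => ((n : ℝ) + 1) * q ^ n := by
    have h1 : Summable fun n : ℕ => (n : ℝ) ^ 1 * q ^ n :=
      summable_pow_mul_geometric_of_norm_lt_one 1 (by rwa [Real.norm_of_nonneg hq0])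
    simpa [add_mul, pow_one, one_mul] using h1.add hgeo
  -- associativity T(RT) = (TR)T for uniformly bounded R
  have hassoc : ∀ (R : ℕ+ → ℕ+ → A) (c : ℝ), (∀ k l : ℕ+, ‖R k l‖ ≤ c) →
      matMul T (matMul R T) = matMul (matMul T R) T := by
    intro R c hc
    have hc0 : 0 ≤ c := (norm_nonneg _).trans (hc 1 1)
    funext i j
    have hrow : ∀ k : ℕ+, Summable fun l : ℕ+ => R k l * T l j := by
      intro k
      refine Summable.of_norm (Summable.of_nonneg_of_le (fun _ => norm_nonneg _)
        (fun l => ?_) (by simpa [mul_assoc] using hCg'.mul_left (c * t)))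
      exact (norm_mul_le _ _).trans
        ((mul_le_mul (hc k l) (hTbl l j) (norm_nonneg _) hc0).trans_eq (by ring))
    have hcol : ∀ l : ℕ+, Summable fun k : ℕ+ => T i k * R k l := by
      intro l
      refine Summable.of_norm (Summable.of_nonneg_of_le (fun _ => norm_nonneg _)
        (fun k => ?_) ((hCg'.mul_left t).mul_right c))
      exact (norm_mul_le _ _).trans
        ((mul_le_mul (hTbr i k) (hc k l) (norm_nonneg _)
          (mul_nonneg ht0 (hgi _).le)).trans_eq (by ring))
    have hF : Summable (Function.uncurry fun (k l : ℕ+) => T i k * (R k l * T l j)) := by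
      apply Summable.of_norm
      refine Summable.of_nonneg_of_le (fun p => norm_nonneg _) (fun p => ?_)
        ((hCg'.mul_left t).mul_of_nonneg (hCg'.mul_left (c * t))
          (fun k => mul_nonneg ht0 (hgi k).le)
          (fun l => mul_nonneg (mul_nonneg hc0 ht0) (hgi l).le))
      have e2 : ‖R p.1 p.2 * T p.2 j‖ ≤ c * t * (g p.2)⁻¹ := (norm_mul_le _ _).trans
        ((mul_le_mul (hc _ _) (hTbl p.2 j) (norm_nonneg _) hc0).trans_eq (by ring))
      exact (norm_mul_le _ _).trans
        (mul_le_mul (hTbr i p.1) e2 (norm_nonneg _) (mul_nonneg ht0 (hgi _).le))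
    show (∑' k : ℕ+, T i k * ∑' l : ℕ+, R k l * T l j)
        = ∑' l : ℕ+, (∑' k : ℕ+, T i k * R k l) * T l j
    calc ∑' k : ℕ+, T i k * ∑' l : ℕ+, R k l * T l j
        = ∑' (k : ℕ+) (l : ℕ+), T i k * (R k l * T l j) :=
          tsum_congr fun k => ((hrow k).tsum_mul_left (T i k)).symm
      _ = ∑' (l : ℕ+) (k : ℕ+), T i k * (R k l * T l j) := (Summable.tsum_comm hF).symm
      _ = ∑' (l : ℕ+) (k : ℕ+), (T i k * R k l) * T l j := by
          simp only [mul_assoc]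
      _ = ∑' l : ℕ+, (∑' k : ℕ+, T i k * R k l) * T l j :=
          tsum_congr fun l => (hcol l).tsum_mul_right (T l j)
  -- T · T^(n+1) = T^(n+2)
  have hTP : ∀ n : ℕ, matMul T (matPow T n) = matPow T (n + 1) := by
    intro n
    induction n with
    | zero => rfl
    | succ n ih =>
      calc matMul T (matPow T (n + 1)) = matMul T (matMul (matPow T n) T) := rfl
        _ = matMul (matMul T (matPow T n)) T :=
            hassoc (matPow T n) (t * q ^ n * (g 1)⁻¹) (hPc n)
        _ = matMul (matPow T (n + 1)) T := by rw [ih]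
  -- T·Y computed
  have hTY : ∀ i j : ℕ+, matMul T (fun i' j' => -∑' n : ℕ, matPow T n i' j') i j
      = -∑' n : ℕ, matPow T (n + 1) i j := by
    intro i j
    have hF : Summable (Function.uncurry fun (n : ℕ) (k : ℕ+) => T i k * matPow T n k j) := by
      apply Summable.of_norm
      refine Summable.of_nonneg_of_le (fun p => norm_nonneg _) (fun p => ?_)
        ((hgeo.mul_left (t * (g 1)⁻¹ * t)).mul_of_nonneg hCg'
          (fun n => mul_nonneg (mul_nonneg (mul_nonneg ht0 (hgi 1).le) ht0) (hqn n))
          (fun k => (hgi k).le))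
      exact (norm_mul_le _ _).trans
        ((mul_le_mul (hTbr i p.2) (hPc p.1 p.2 j) (norm_nonneg _)
          (mul_nonneg ht0 (hgi _).le)).trans_eq (by ring))
    show (∑' k : ℕ+, T i k * -∑' n : ℕ, matPow T n k j) = -∑' n : ℕ, matPow T (n + 1) i j
    calc ∑' k : ℕ+, T i k * -∑' n : ℕ, matPow T n k j
        = ∑' k : ℕ+, -(T i k * ∑' n : ℕ, matPow T n k j) := by simp only [mul_neg]
      _ = -∑' k : ℕ+, T i k * ∑' n : ℕ, matPow T n k j := tsum_neg
      _ = -∑' (k : ℕ+) (n : ℕ), T i k * matPow T n k j :=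
          congrArg Neg.neg (tsum_congr fun k => ((hZsum k j).tsum_mul_left (T i k)).symm)
      _ = -∑' (n : ℕ) (k : ℕ+), T i k * matPow T n k j :=
          congrArg Neg.neg (Summable.tsum_comm hF)
      _ = -∑' n : ℕ, matPow T (n + 1) i j := by
          refine congrArg Neg.neg (tsum_congr fun n => ?_)
          have : matMul T (matPow T n) i j = ∑' k : ℕ+, T i k * matPow T n k j := rfl
          rw [← this, hTP n]
  -- Y·T computed
  have hYT : ∀ i j : ℕ+, matMul (fun i' j' => -∑' n : ℕ, matPow T n i' j') T i j
      = -∑' n : ℕ, matPow T (n + 1) i j := by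
    intro i j
    have hF : Summable (Function.uncurry fun (n : ℕ) (k : ℕ+) => matPow T n i k * T k j) := by
      apply Summable.of_norm
      refine Summable.of_nonneg_of_le (fun p => norm_nonneg _) (fun p => ?_)
        ((hgeo.mul_left (t * t * (g 1)⁻¹)).mul_of_nonneg hCg'
          (fun n => mul_nonneg (mul_nonneg (mul_nonneg ht0 ht0) (hgi 1).le) (hqn n))
          (fun k => (hgi k).le))
      exact (norm_mul_le _ _).trans
        ((mul_le_mul (hPr p.1 i p.2) (hTc p.2 j) (norm_nonneg _)
          (mul_nonneg (mul_nonneg ht0 (hqn p.1)) (hgi _).le)).trans_eq (by ring))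
    show (∑' k : ℕ+, (-∑' n : ℕ, matPow T n i k) * T k j) = -∑' n : ℕ, matPow T (n + 1) i j
    calc ∑' k : ℕ+, (-∑' n : ℕ, matPow T n i k) * T k j
        = ∑' k : ℕ+, -((∑' n : ℕ, matPow T n i k) * T k j) := by simp only [neg_mul]
      _ = -∑' k : ℕ+, (∑' n : ℕ, matPow T n i k) * T k j := tsum_neg
      _ = -∑' (k : ℕ+) (n : ℕ), matPow T n i k * T k j :=
          congrArg Neg.neg (tsum_congr fun k => ((hZsum i k).tsum_mul_right (T k j)).symm)
      _ = -∑' (n : ℕ) (k : ℕ+), matPow T n i k * T k j :=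
          congrArg Neg.neg (Summable.tsum_comm hF)
      _ = -∑' n : ℕ, matPow T (n + 1) i j := rfl
  refine ⟨habs, ?_, ?_, ?_⟩
  · -- Y ∈ M(A, W)
    intro f hfW
    obtain ⟨hfmono, hfpos⟩ := hW f hfW
    set M := wnorm f T with hM_def
    set S := ∑' n : ℕ, ((n : ℝ) + 1) * q ^ n with hS_def
    refine ⟨M * S, ?_⟩
    rintro x ⟨⟨i, j⟩, rfl⟩
    simp only
    rw [norm_neg]
    have h1 : ‖∑' n : ℕ, matPow T n i j‖ ≤ ∑' n : ℕ, ‖matPow T n i j‖ :=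
      norm_tsum_le_tsum_norm (habs i j)
    have h2 : ∑' n : ℕ, ‖matPow T n i j‖
        ≤ ∑' n : ℕ, (M * (f (max i j))⁻¹) * (((n : ℝ) + 1) * q ^ n) := by
      refine Summable.tsum_le_tsum (fun n => ?_) (habs i j) (hS.mul_left _)
      exact (hPf f hfW n i j).trans_eq (by ring)
    have h3 : ∑' n : ℕ, (M * (f (max i j))⁻¹) * (((n : ℝ) + 1) * q ^ n)
        = M * (f (max i j))⁻¹ * S := Summable.tsum_mul_left _ hS
    have hfm := hfpos (max i j)
    calc f (max i j) * ‖∑' n : ℕ, matPow T n i j‖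
        ≤ f (max i j) * (M * (f (max i j))⁻¹ * S) :=
          mul_le_mul_of_nonneg_left (h1.trans (h2.trans_eq h3)) hfm.le
      _ = M * S := by field_simp
  · -- commutation
    funext i j
    exact (hTY i j).trans (hYT i j).symm
  · -- quasi-inverse identity
    intro i j
    rw [hTY i j, Summable.tsum_eq_zero_add (hZsum i j)]
    have h0 : matPow T 0 i j = T i j := rfl
    rw [h0]
    abel
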